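/- Let f : ℝ₊ⁿ → ℝ satisfy f(0) ≥ 0 and the diminishing-returns (DR-submodularity) property: for all x, y ∈ ℝ₊ⁿ with x ≤ y coordinatewise, every i ∈ {1,…,n} and every z ≥ 0, f(x + z·e_i) − f(x) ≥ f(y + z·e_i) − f(y). Then f is subadditive: f(x + y) ≤ f(x) + f(y) for all x, y ∈ ℝ₊ⁿ. -/

import Mathlib

/-- A function on the nonnegative orthant with `f 0 ≥ 0` satisfying the
diminishing-returns (DR-submodularity) property is subadditive. -/
theorem drSubmodular_subadditive
    {n : ℕ} (f : (Fin n → ℝ) → ℝ)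
    (hf0 : 0 ≤ f 0)
    (hDR : ∀ x y : Fin n → ℝ, 0 ≤ x → x ≤ y → ∀ i : Fin n, ∀ z : ℝ, 0 ≤ z →
      f (y + Pi.single i z) - f y ≤ f (x + Pi.single i z) - f x) :
    ∀ x y : Fin n → ℝ, 0 ≤ x → 0 ≤ y → f (x + y) ≤ f x + f y := by
  intro x y hx hy
  have key : ∀ s : Finset (Fin n), ∀ a b : Fin n → ℝ, 0 ≤ a → a ≤ b →
      f (b + ∑ i ∈ s, Pi.single i (y i)) - f b ≤
      f (a + ∑ i ∈ s, Pi.single i (y i)) - f a := by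
    intro s
    induction s using Finset.induction_on with
    | empty => intro a b _ _; simp
    | insert i s hmem ih =>
      intro a b ha hab
      rw [Finset.sum_insert hmem]
      have hY : (0:Fin n → ℝ) ≤ ∑ j ∈ s, Pi.single j (y j) := by
        apply Finset.sum_nonneg
        intro j _
        intro k
        by_cases h : j = k
        · subst h; simpa using hy j
        · simp [Pi.single_eq_of_ne (Ne.symm h)]
      have h1 := hDR (a + ∑ j ∈ s, Pi.single j (y j)) (b + ∑ j ∈ s, Pi.single j (y j))
        (le_add_of_le_of_nonneg ha hY) (add_le_add_left hab _) i (y i) (hy i)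
      have h2 := ih a b ha hab
      have e1 : b + (Pi.single i (y i) + ∑ j ∈ s, Pi.single j (y j)) =
          b + ∑ j ∈ s, Pi.single j (y j) + Pi.single i (y i) := by ring
      have e2 : a + (Pi.single i (y i) + ∑ j ∈ s, Pi.single j (y j)) =
          a + ∑ j ∈ s, Pi.single j (y j) + Pi.single i (y i) := by ring
      rw [e1, e2]
      linarith
  have hsum : ∑ i : Fin n, Pi.single i (y i) = y := by
    ext k
    simp [Finset.sum_apply, Pi.single_apply]
  have h := key Finset.univ 0 x le_rfl hx
  rw [hsum] at h
  simp only [zero_add] at h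
  linarith
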